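/- Supercritical connectivity of evolutionary interval graphs: let (r_n) be a sequence of positive reals with lim_{n→∞} n·r_n/log n > 1, and let J_{r_n} be the evolutionary interval graph on n vertices with parameter r_n. Then the probability that J_{r_n} is a connected graph tends to 1 as n → ∞. -/

import Mathlib

open MeasureTheory Filter

noncomputable section

/-- The uniform probability measure on `[0,1] ⊆ ℝ`. -/
def unif01 : Measure ℝ := volume.restrict (Set.Icc 0 1)

/-- Sample space for an evolutionary interval graph on `n` vertices:
the first component gives the midpoints `c_i` (uniform on `[0,1]`) and the second
component gives the rescaled lengths `s_i` (uniform on `[0,1]`, so that the interval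
length `L_i = 2 r s_i` is uniform on `[0,2r]`), all independent. -/
abbrev EvolSpace (n : ℕ) := (Fin n → ℝ) × (Fin n → ℝ)

/-- The product measure making all `2n` coordinates independent uniform on `[0,1]`. -/
def evolMeasure (n : ℕ) : Measure (EvolSpace n) :=
  (Measure.pi fun _ : Fin n => unif01).prod (Measure.pi fun _ : Fin n => unif01)

/-- The interval of vertex `i`: midpoint `ω.1 i`, length `2 * r * ω.2 i`
(uniform on `[0, 2r]` when `ω.2 i` is uniform on `[0,1]`). -/
def evolInterval (n : ℕ) (r : ℝ) (ω : EvolSpace n) (i : Fin n) : Set ℝ :=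
  Set.Icc (ω.1 i - r * ω.2 i) (ω.1 i + r * ω.2 i)

/-- The evolutionary interval graph `J_r` determined by a sample `ω`: distinct
vertices are adjacent iff their intervals intersect. -/
def evolGraph (n : ℕ) (r : ℝ) (ω : EvolSpace n) : SimpleGraph (Fin n) where
  Adj i j := i ≠ j ∧ (evolInterval n r ω i ∩ evolInterval n r ω j).Nonempty
  symm := by
    constructor
    intro i j h
    exact ⟨Ne.symm h.1, by rw [Set.inter_comm]; exact h.2⟩
  loopless := by
    constructor
    intro i h
    exact h.1 rfl

/-- The probability that the evolutionary interval graph `J_r` on `n` vertices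
is connected. -/
def connProb (n : ℕ) (r : ℝ) : ENNReal :=
  evolMeasure n {ω | (evolGraph n r ω).Connected}


section EvolAux

instance : IsProbabilityMeasure unif01 := by
  constructor
  rw [unif01, Measure.restrict_apply MeasurableSet.univ, Set.univ_inter, Real.volume_Icc]
  norm_num

instance evolMeasure_prob (n : ℕ) : IsProbabilityMeasure (evolMeasure n) := by
  unfold evolMeasure; infer_instance

lemma measurableSet_forall_mem (n : ℕ) (S : Set (ℝ × ℝ)) (hS : MeasurableSet S) :
    MeasurableSet {ω : EvolSpace n | ∀ i, (ω.1 i, ω.2 i) ∈ S} := by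
  have : {ω : EvolSpace n | ∀ i, (ω.1 i, ω.2 i) ∈ S}
      = ⋂ i, (fun ω : EvolSpace n => (ω.1 i, ω.2 i)) ⁻¹' S := by
    ext ω; simp
  rw [this]
  exact MeasurableSet.iInter fun i =>
    (((measurable_pi_apply i).comp measurable_fst).prodMk
      ((measurable_pi_apply i).comp measurable_snd)) hS

/-- Key independence computation: the probability that all `n` independent vertex data
avoid landing in a fixed measurable set. -/
lemma evolMeasure_forall_mem (n : ℕ) (S : Set (ℝ × ℝ)) (hS : MeasurableSet S) :
    evolMeasure n {ω : EvolSpace n | ∀ i, (ω.1 i, ω.2 i) ∈ S}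
      = ((unif01.prod unif01) S) ^ n := by
  have hmp := measurePreserving_arrowProdEquivProdArrow ℝ ℝ (Fin n)
    (fun _ => unif01) (fun _ => unif01)
  have hmeas := measurableSet_forall_mem n S hS
  rw [show evolMeasure n =
      Measure.map (MeasurableEquiv.arrowProdEquivProdArrow ℝ ℝ (Fin n))
        (Measure.pi fun _ : Fin n => unif01.prod unif01) from hmp.map_eq.symm,
    Measure.map_apply (MeasurableEquiv.arrowProdEquivProdArrow ℝ ℝ (Fin n)).measurable hmeas]
  have hpre : (MeasurableEquiv.arrowProdEquivProdArrow ℝ ℝ (Fin n)) ⁻¹'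
      {ω : EvolSpace n | ∀ i, (ω.1 i, ω.2 i) ∈ S} = Set.pi Set.univ fun _ => S := by
    ext f
    simp [MeasurableEquiv.arrowProdEquivProdArrow, Equiv.arrowProdEquivProdArrow]
  rw [hpre, Measure.pi_pi]
  simp

/-- Per-cell union-bound step: probability that no vertex datum lands in `S`. -/
lemma uncov_bound (n : ℕ) (S : Set (ℝ × ℝ)) (hS : MeasurableSet S) (q : ℝ)
    (hq0 : 0 ≤ q) (hq1 : q ≤ 1) (hq : ENNReal.ofReal q ≤ (unif01.prod unif01) S) :
    evolMeasure n {ω : EvolSpace n | ∀ i, (ω.1 i, ω.2 i) ∈ Sᶜ}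
      ≤ ENNReal.ofReal (Real.exp (-((n : ℝ) * q))) := by
  rw [evolMeasure_forall_mem n Sᶜ hS.compl]
  have h1 : (unif01.prod unif01) Sᶜ ≤ ENNReal.ofReal (1 - q) := by
    rw [prob_compl_eq_one_sub hS,
      show ENNReal.ofReal (1 - q) = 1 - ENNReal.ofReal q by
        rw [ENNReal.ofReal_sub _ hq0, ENNReal.ofReal_one]]
    exact tsub_le_tsub_left hq 1
  calc ((unif01.prod unif01) Sᶜ) ^ n ≤ (ENNReal.ofReal (1 - q)) ^ n :=
        pow_le_pow_left' h1 n
    _ = ENNReal.ofReal ((1 - q) ^ n) := (ENNReal.ofReal_pow (by linarith) n).symm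
    _ ≤ ENNReal.ofReal (Real.exp (-((n : ℝ) * q))) := by
        apply ENNReal.ofReal_le_ofReal
        have h2 : 1 - q ≤ Real.exp (-q) := by
          linarith [Real.add_one_le_exp (-q)]
        calc (1 - q) ^ n ≤ (Real.exp (-q)) ^ n := pow_le_pow_left₀ (by linarith) h2 n
          _ = Real.exp (-((n : ℝ) * q)) := by
              rw [← Real.exp_nat_mul]; ring_nf

/-- Vertex with data `p = (c, s)` covers the cell `[a, a+δ]`. -/
def coverSet (r a δ : ℝ) : Set (ℝ × ℝ) :=
  {p | p.1 - r * p.2 ≤ a ∧ a + δ ≤ p.1 + r * p.2}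

lemma measurableSet_coverSet (r a δ : ℝ) : MeasurableSet (coverSet r a δ) := by
  have h1 : MeasurableSet {p : ℝ × ℝ | p.1 - r * p.2 ≤ a} :=
    measurableSet_le (measurable_fst.sub (measurable_snd.const_mul r)) measurable_const
  have h2 : MeasurableSet {p : ℝ × ℝ | a + δ ≤ p.1 + r * p.2} :=
    measurableSet_le measurable_const (measurable_fst.add (measurable_snd.const_mul r))
  exact h1.inter h2

/-- If every cell `[kδ, (k+1)δ]`, `k < K`, is covered by some vertex interval, all
midpoints lie in `[0,1] ⊆ [0, Kδ]` and lengths are nonneg, then the graph is connected. -/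
lemma connected_of_covers (n K : ℕ) (r δ : ℝ) (hr : 0 ≤ r) (hδ : 0 < δ)
    (hK : 1 ≤ (K : ℝ) * δ) (ω : EvolSpace n)
    (hc : ∀ i, ω.1 i ∈ Set.Icc (0:ℝ) 1) (hs : ∀ i, 0 ≤ ω.2 i)
    (hcov : ∀ k < K, ∃ i, (ω.1 i, ω.2 i) ∈ coverSet r ((k : ℝ) * δ) δ) :
    (evolGraph n r ω).Connected := by
  classical
  have hK0 : 0 < K := by
    by_contra h
    push_neg at h
    interval_cases K
    simp at hK; linarith
  choose f hf using fun k (hk : k < K) => hcov k hk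
  have hmem : ∀ i, ω.1 i ∈ evolInterval n r ω i := by
    intro i
    have : 0 ≤ r * ω.2 i := mul_nonneg hr (hs i)
    constructor <;> simp <;> linarith
  have hreach : ∀ (i j : Fin n) (x : ℝ), x ∈ evolInterval n r ω i →
      x ∈ evolInterval n r ω j → (evolGraph n r ω).Reachable i j := by
    intro i j x hxi hxj
    by_cases hij : i = j
    · subst hij; exact SimpleGraph.Reachable.refl i
    · exact SimpleGraph.Adj.reachable ⟨hij, ⟨x, hxi, hxj⟩⟩
  have hcell : ∀ k (hk : k < K), Set.Icc ((k:ℝ)*δ) ((k:ℝ)*δ + δ)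
      ⊆ evolInterval n r ω (f k hk) := by
    intro k hk x hx
    obtain ⟨h1, h2⟩ := hf k hk
    exact ⟨le_trans h1 hx.1, le_trans hx.2 h2⟩
  have hchain : ∀ k (hk : k < K), (evolGraph n r ω).Reachable (f 0 hK0) (f k hk) := by
    intro k
    induction k with
    | zero => intro hk; exact SimpleGraph.Reachable.refl _
    | succ k ih =>
      intro hk
      have hk' : k < K := Nat.lt_of_succ_lt hk
      refine (ih hk').trans (hreach _ _ ((k:ℝ)*δ + δ) ?_ ?_)
      · exact hcell k hk' ⟨by nlinarith, le_refl _⟩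
      · refine hcell (k+1) hk ⟨le_of_eq ?_, ?_⟩ <;> push_cast <;> nlinarith
  have hincell : ∀ i : Fin n, ∃ k, ∃ hk : k < K,
      ω.1 i ∈ Set.Icc ((k:ℝ)*δ) ((k:ℝ)*δ + δ) := by
    intro i
    obtain ⟨hc0, hc1⟩ := hc i
    by_cases hlt : ω.1 i < (K : ℝ) * δ
    · refine ⟨⌊ω.1 i / δ⌋₊, ?_, ?_, ?_⟩
      · have h1 : (⌊ω.1 i / δ⌋₊ : ℝ) ≤ ω.1 i / δ := Nat.floor_le (by positivity)
        have : (⌊ω.1 i / δ⌋₊ : ℝ) * δ ≤ ω.1 i := (le_div_iff₀ hδ).1 h1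
        have : (⌊ω.1 i / δ⌋₊ : ℝ) < K := by
          by_contra hcon
          push_neg at hcon
          nlinarith
        exact_mod_cast this
      · exact (le_div_iff₀ hδ).1 (Nat.floor_le (by positivity))
      · have h2 : ω.1 i / δ < ⌊ω.1 i / δ⌋₊ + 1 := Nat.lt_floor_add_one _
        have : ω.1 i < ((⌊ω.1 i / δ⌋₊ : ℝ) + 1) * δ := (div_lt_iff₀ hδ).1 h2
        linarith [this]
    · push_neg at hlt
      refine ⟨K - 1, Nat.sub_lt hK0 one_pos, ?_, ?_⟩
      · have : ((K - 1 : ℕ) : ℝ) = (K : ℝ) - 1 := by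
          rw [Nat.cast_sub hK0]; norm_num
        rw [this]
        nlinarith
      · have : ((K - 1 : ℕ) : ℝ) = (K : ℝ) - 1 := by
          rw [Nat.cast_sub hK0]; norm_num
        rw [this]
        have : ω.1 i ≤ (K : ℝ) * δ := le_trans hc1 hK
        nlinarith
  have hbase : ∀ i : Fin n, (evolGraph n r ω).Reachable i (f 0 hK0) := by
    intro i
    obtain ⟨k, hk, hmemcell⟩ := hincell i
    exact ((hreach i (f k hk) (ω.1 i) (hmem i) (hcell k hk hmemcell))).trans
      (hchain k hk).symm
  have : Nonempty (Fin n) := ⟨f 0 hK0⟩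
  exact ⟨fun i j => (hbase i).trans (hbase j).symm⟩

lemma unif01_Icc (c1 c2 : ℝ) (h0 : 0 ≤ c1) (h1 : c2 ≤ 1) :
    unif01 (Set.Icc c1 c2) = ENNReal.ofReal (c2 - c1) := by
  rw [unif01, Measure.restrict_apply measurableSet_Icc]
  have hsub : Set.Icc c1 c2 ⊆ Set.Icc 0 1 :=
    fun x hx => ⟨le_trans h0 hx.1, le_trans hx.2 h1⟩
  rw [Set.inter_eq_left.mpr hsub, Real.volume_Icc]

lemma unif01_Ioc (s1 s2 : ℝ) (h0 : 0 ≤ s1) (h1 : s2 ≤ 1) :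
    unif01 (Set.Ioc s1 s2) = ENNReal.ofReal (s2 - s1) := by
  rw [unif01, Measure.restrict_apply measurableSet_Ioc]
  have hsub : Set.Ioc s1 s2 ⊆ Set.Icc 0 1 :=
    fun x hx => ⟨le_trans h0 hx.1.le, le_trans hx.2 h1⟩
  rw [Set.inter_eq_left.mpr hsub, Real.volume_Ioc]

lemma nu_rect (c1 c2 s1 s2 : ℝ) (h0c : 0 ≤ c1) (h1c : c2 ≤ 1) (h0s : 0 ≤ s1) (h1s : s2 ≤ 1) :
    (unif01.prod unif01) (Set.Icc c1 c2 ×ˢ Set.Ioc s1 s2)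
      = ENNReal.ofReal (c2 - c1) * ENNReal.ofReal (s2 - s1) := by
  rw [Measure.prod_prod, unif01_Icc _ _ h0c h1c, unif01_Ioc _ _ h0s h1s]

lemma sum_odds (M : ℕ) : ∑ i ∈ Finset.range M, (2 * (i : ℝ) + 1) = (M : ℝ) ^ 2 := by
  induction M with
  | zero => simp
  | succ M ih => rw [Finset.sum_range_succ, ih]; push_cast; ring

/-- Lower bound on the probability that one vertex covers an interior cell. -/
lemma cover_lb_interior (r δ : ℝ) (m : ℕ) (hm : 2 ≤ m) (hr : 0 < r) (hδ : δ = r / m)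
    (a : ℝ) (ha0 : r ≤ a) (ha1 : a + δ + r ≤ 1) :
    ENNReal.ofReal (r * ((m : ℝ) - 1) ^ 2 / (m : ℝ) ^ 2)
      ≤ (unif01.prod unif01) (coverSet r a δ) := by
  have hm0 : (0:ℝ) < m := by positivity
  have hδ0 : 0 < δ := by rw [hδ]; positivity
  set R : ℕ → Set (ℝ × ℝ) := fun i =>
    Set.Icc (a + δ - r * ((i:ℝ)+1) / m) (a + r * ((i:ℝ)+1) / m) ×ˢ
      Set.Ioc (((i:ℝ)+1)/m) (((i:ℝ)+2)/m) with hR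
  have hsub : (⋃ i ∈ Finset.range (m-1), R i) ⊆ coverSet r a δ := by
    intro p hp
    simp only [Set.mem_iUnion, Finset.mem_range] at hp
    obtain ⟨i, hi, hp⟩ := hp
    obtain ⟨⟨hpc1, hpc2⟩, hps1, hps2⟩ := hp
    have hrs : r * ((i:ℝ)+1) / m < r * p.2 := by
      have := mul_lt_mul_of_pos_left hps1 hr
      calc r * ((i:ℝ)+1) / m = r * ((((i:ℝ)+1))/m) := by ring
        _ < r * p.2 := this
    exact ⟨by linarith, by linarith⟩
  have key : ∀ i j : ℕ, i < j → Disjoint (R i) (R j) := by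
    intro i j hlt
    refine Set.disjoint_left.mpr ?_
    rintro p ⟨_, _, hps2⟩ ⟨_, hqs1, _⟩
    have h1 : ((i:ℝ)+2)/m ≤ ((j:ℝ)+1)/m := by
      have hn : ((i:ℝ)) + 1 ≤ (j:ℝ) := by exact_mod_cast hlt
      have : (i:ℝ) + 2 ≤ (j:ℝ) + 1 := by linarith
      gcongr
    linarith
  have hdisj : (Finset.range (m-1) : Set ℕ).PairwiseDisjoint R := by
    intro i _ j _ hij
    rcases hij.lt_or_gt with h | h
    · exact key _ _ h
    · exact (key _ _ h).symm
  have hmeasR : ∀ i ∈ Finset.range (m-1), MeasurableSet (R i) :=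
    fun i _ => measurableSet_Icc.prod measurableSet_Ioc
  have hval : ∀ i ∈ Finset.range (m-1),
      (unif01.prod unif01) (R i) = ENNReal.ofReal ((2*(i:ℝ)+1) * r / m^2) := by
    intro i hi
    have him : (i:ℝ) + 2 ≤ m := by
      have : i + 2 ≤ m := by
        simp only [Finset.mem_range] at hi; omega
      exact_mod_cast this
    have hfr : r * ((i:ℝ)+1) / m ≤ r := by
      rw [div_le_iff₀ hm0]
      nlinarith
    have hfr0 : 0 ≤ r * ((i:ℝ)+1) / m := by positivity
    rw [hR]
    rw [nu_rect _ _ _ _ (by linarith) (by linarith) (by positivity)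
      (by rw [div_le_one hm0]; linarith)]
    have hlen : (a + r*((i:ℝ)+1)/m) - (a + δ - r*((i:ℝ)+1)/m) = (2*(i:ℝ)+1)*r/m := by
      rw [hδ]; field_simp; ring
    have hslen : ((i:ℝ)+2)/m - ((i:ℝ)+1)/m = 1/m := by
      rw [div_sub_div_same]; norm_num
    rw [hlen, hslen, ← ENNReal.ofReal_mul (by positivity)]
    congr 1
    field_simp
  calc ENNReal.ofReal (r * ((m : ℝ) - 1) ^ 2 / (m : ℝ) ^ 2)
      = ∑ i ∈ Finset.range (m-1), ENNReal.ofReal ((2*(i:ℝ)+1) * r / m^2) := by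
        rw [← ENNReal.ofReal_sum_of_nonneg (fun i _ => by positivity)]
        congr 1
        have hterm : ∀ i : ℕ, (2*(i:ℝ)+1) * r / m^2 = (2*(i:ℝ)+1) * (r / m^2) :=
          fun i => by ring
        simp_rw [hterm]
        rw [← Finset.sum_mul, sum_odds]
        rw [show (((m-1 : ℕ)) : ℝ) = (m:ℝ) - 1 by
          rw [Nat.cast_sub (by omega)]; norm_num]
        ring
    _ = ∑ i ∈ Finset.range (m-1), (unif01.prod unif01) (R i) :=
        Finset.sum_congr rfl fun i hi => (hval i hi).symm
    _ = (unif01.prod unif01) (⋃ i ∈ Finset.range (m-1), R i) :=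
        (measure_biUnion_finset hdisj hmeasR).symm
    _ ≤ (unif01.prod unif01) (coverSet r a δ) := measure_mono hsub

/-- Lower bound on the probability that one vertex covers an arbitrary cell
(valid also near the boundary). -/
lemma cover_lb_boundary (r δ : ℝ) (m : ℕ) (hm : 3 ≤ m) (hr : 0 < r) (hr1 : r ≤ 1)
    (hδ : δ = r / m) (a : ℝ) (ha0 : 0 ≤ a) (ha1 : a ≤ 1) :
    ENNReal.ofReal (r * ((m : ℝ) - 2) / (m : ℝ) ^ 2)
      ≤ (unif01.prod unif01) (coverSet r a δ) := by
  have hm0 : (0:ℝ) < m := by positivity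
  have hδ0 : 0 < δ := by rw [hδ]; positivity
  set u : ℝ := r * ((m:ℝ) - 1) / m with hu
  have hm3 : (3:ℝ) ≤ (m:ℝ) := by exact_mod_cast hm
  have hu0 : 0 ≤ u := by
    rw [hu]; apply div_nonneg; nlinarith; linarith
  have hur : u ≤ r := by
    rw [hu, div_le_iff₀ hm0]; nlinarith
  have huδ : δ ≤ u := by
    rw [hu, hδ, div_le_div_iff₀ hm0 hm0]
    nlinarith [mul_pos hr hm0]
  set c1 : ℝ := max 0 (a + δ - u) with hc1
  set c2 : ℝ := min 1 (a + u) with hc2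
  have hsub : Set.Icc c1 c2 ×ˢ Set.Ioc (((m:ℝ)-1)/m) 1 ⊆ coverSet r a δ := by
    rintro p ⟨⟨hpc1, hpc2⟩, hps1, _⟩
    have hrs : u < r * p.2 := by
      have := mul_lt_mul_of_pos_left hps1 hr
      calc u = r * (((m:ℝ)-1)/m) := by rw [hu]; ring
        _ < r * p.2 := this
    have h1 : p.1 ≤ a + u := le_trans hpc2 (min_le_right _ _)
    have h2 : a + δ - u ≤ p.1 := le_trans (le_max_right _ _) hpc1
    exact ⟨by linarith, by linarith⟩
  have hlen : u - δ ≤ c2 - c1 := by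
    rw [hc1, hc2]
    rcases le_total (a + u) 1 with h | h <;> rcases le_total (a + δ - u) 0 with h' | h' <;>
      simp [max_eq_left, max_eq_right, min_eq_left, min_eq_right, h, h'] <;> linarith
  have hrect : (unif01.prod unif01) (Set.Icc c1 c2 ×ˢ Set.Ioc (((m:ℝ)-1)/m) 1)
      = ENNReal.ofReal (c2 - c1) * ENNReal.ofReal (1 - ((m:ℝ)-1)/m) := by
    refine nu_rect _ _ _ _ (le_max_left _ _) (min_le_left _ _)
      (div_nonneg (by linarith) (le_of_lt hm0)) le_rfl
  calc ENNReal.ofReal (r * ((m : ℝ) - 2) / (m : ℝ) ^ 2)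
      = ENNReal.ofReal (u - δ) * ENNReal.ofReal (1 - ((m:ℝ)-1)/m) := by
        rw [← ENNReal.ofReal_mul (by linarith)]
        congr 1
        rw [hu, hδ]
        field_simp
        ring
    _ ≤ ENNReal.ofReal (c2 - c1) * ENNReal.ofReal (1 - ((m:ℝ)-1)/m) :=
        mul_le_mul_left (ENNReal.ofReal_le_ofReal hlen) _
    _ = (unif01.prod unif01) (Set.Icc c1 c2 ×ˢ Set.Ioc (((m:ℝ)-1)/m) 1) := hrect.symm
    _ ≤ (unif01.prod unif01) (coverSet r a δ) := measure_mono hsub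

end EvolAux

set_option maxHeartbeats 1000000 in
/-- Supercritical connectivity of evolutionary interval graphs:
if `n * r n / log n` converges to a limit `L > 1`, then `J_{r n}` is connected
with probability tending to `1`. -/
theorem evolGraph_connected_supercritical (r : ℕ → ℝ) (hr : ∀ n, 0 < r n)
    (L : ℝ) (hL : 1 < L)
    (hlim : Tendsto (fun n : ℕ => (n : ℝ) * r n / Real.log n) atTop (nhds L)) :
    Tendsto (fun n : ℕ => connProb n (r n)) atTop (nhds 1) := by
  classical
  haveI : ∀ n, IsProbabilityMeasure (evolMeasure n) := evolMeasure_prob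
  set A : ℝ := (1 + L) / 2 with hA
  have hA1 : 1 < A := by rw [hA]; linarith
  have hAL : A < L := by rw [hA]; linarith
  have hA0 : 0 < A := by linarith
  -- choose the resolution `m`
  obtain ⟨m, hm3, hmA⟩ : ∃ m : ℕ, 3 ≤ m ∧ 2 * A / (A - 1) < (m : ℝ) := by
    obtain ⟨m0, hm0⟩ := exists_nat_gt (2 * A / (A - 1))
    exact ⟨m0 + 3, by omega, by push_cast; linarith⟩
  have hmR : (3:ℝ) ≤ (m:ℝ) := by exact_mod_cast hm3
  have hm0R : (0:ℝ) < (m:ℝ) := by linarith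
  set β : ℝ := A * (((m:ℝ) - 1) / m) ^ 2 - 1 with hβ
  have hβ0 : 0 < β := by
    have h1 : 2 * A < (m:ℝ) * (A - 1) := by
      rw [div_lt_iff₀ (by linarith)] at hmA; linarith
    have h2 : 1 - 2 / (m:ℝ) ≤ (((m:ℝ)-1)/m)^2 := by
      rw [div_pow, le_div_iff₀ (by positivity)]
      have : ((m:ℝ)-1)^2 = (m:ℝ)^2 - 2*m + 1 := by ring
      rw [this]
      have : (1 - 2 / (m:ℝ)) * (m:ℝ)^2 = (m:ℝ)^2 - 2*m := by
        field_simp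
      rw [this]; linarith
    have h3 : A * (1 - 2/(m:ℝ)) ≤ A * (((m:ℝ)-1)/m)^2 :=
      mul_le_mul_of_nonneg_left h2 (le_of_lt hA0)
    have h4 : 1 < A * (1 - 2/(m:ℝ)) := by
      have hminv : 2 / (m:ℝ) * (m:ℝ) = 2 := by field_simp
      have := mul_pos hA0 hm0R
      rw [show A * (1 - 2/(m:ℝ)) = A - A * (2/(m:ℝ)) by ring]
      have h5 : A * (2/(m:ℝ)) < A - 1 := by
        rw [show A * (2/(m:ℝ)) = 2*A/(m:ℝ) by ring, div_lt_iff₀ hm0R]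
        nlinarith
      linarith
    rw [hβ]; linarith
  set γ : ℝ := A * ((m:ℝ) - 2) / (m:ℝ)^2 with hγ
  have hγ0 : 0 < γ := by
    rw [hγ]; apply div_pos; nlinarith; positivity
  -- the explicit bound sequence
  set B : ℕ → ℝ := fun n => Real.exp (-(β * Real.log n)) +
      (2*(m:ℝ)+2) * Real.exp (-(γ * Real.log n)) with hB
  have hBpos : ∀ n, 0 ≤ B n := fun n => by positivity
  have hlog : Tendsto (fun n : ℕ => Real.log n) atTop atTop :=
    Real.tendsto_log_atTop.comp tendsto_natCast_atTop_atTop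
  have hBlim : Tendsto B atTop (nhds 0) := by
    have t1 : Tendsto (fun n : ℕ => Real.exp (-(β * Real.log n))) atTop (nhds 0) :=
      Real.tendsto_exp_atBot.comp
        (tendsto_neg_atTop_atBot.comp (hlog.const_mul_atTop hβ0))
    have t2 : Tendsto (fun n : ℕ => Real.exp (-(γ * Real.log n))) atTop (nhds 0) :=
      Real.tendsto_exp_atBot.comp
        (tendsto_neg_atTop_atBot.comp (hlog.const_mul_atTop hγ0))
    have := t1.add (t2.const_mul (2*(m:ℝ)+2))
    simpa using this
  -- the main eventual estimate
  have hmain : ∀ᶠ n in atTop, 1 - ENNReal.ofReal (B n) ≤ connProb n (r n) := by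
    have F1 : ∀ᶠ n : ℕ in atTop, 2 ≤ n := eventually_ge_atTop 2
    have F2 : ∀ᶠ n : ℕ in atTop, A ≤ (n : ℝ) * r n / Real.log n :=
      hlim.eventually (eventually_ge_nhds hAL)
    have F3 : ∀ᶠ n : ℕ in atTop, (n : ℝ) * r n / Real.log n ≤ L + 1 :=
      hlim.eventually (eventually_le_nhds (by linarith))
    have F4 : ∀ᶠ n : ℕ in atTop, Real.log n / n ≤ 1 / (L + 1) := by
      have hT : Tendsto (fun n : ℕ => Real.log n / n) atTop (nhds 0) :=
        Real.isLittleO_log_id_atTop.tendsto_div_nhds_zero.comp tendsto_natCast_atTop_atTop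
      exact hT.eventually (eventually_le_nhds (by positivity))
    have F5 : ∀ᶠ n : ℕ in atTop, 2*(m:ℝ) ≤ A * Real.log n :=
      (hlog.const_mul_atTop hA0).eventually (eventually_ge_atTop _)
    filter_upwards [F1, F2, F3, F4, F5] with n h1 h2 h3 h4 h5
    set rn := r n with hrndef
    have hrn0 : 0 < rn := hr n
    have hn1 : (1:ℝ) < (n:ℝ) := by exact_mod_cast h1
    have hlogpos : 0 < Real.log n := Real.log_pos hn1
    have hn0 : (0:ℝ) < n := by linarith
    have hE2 : A * Real.log n ≤ (n:ℝ) * rn := by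
      have := mul_le_mul_of_nonneg_right h2 hlogpos.le
      rwa [div_mul_cancel₀ _ (ne_of_gt hlogpos)] at this
    have hnr : (n:ℝ) * rn ≤ (L+1) * Real.log n := by
      have := mul_le_mul_of_nonneg_right h3 hlogpos.le
      rw [div_mul_cancel₀ _ (ne_of_gt hlogpos)] at this
      linarith
    have hr1 : rn ≤ 1 := by
      rw [div_le_div_iff₀ hn0 (by linarith : (0:ℝ) < L + 1)] at h4
      have hup : (n:ℝ) * rn ≤ (n:ℝ) * 1 := by nlinarith
      exact le_of_mul_le_mul_left hup hn0
    set δ : ℝ := rn / m with hδdef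
    have hδ0 : 0 < δ := by rw [hδdef]; positivity
    have hmδ : (m:ℝ) * δ = rn := by rw [hδdef]; field_simp
    set K : ℕ := ⌈(m:ℝ) / rn⌉₊ with hKdef
    have hK1 : 1 ≤ (K:ℝ) * δ := by
      have hc := Nat.le_ceil ((m:ℝ) / rn)
      have : ((m:ℝ)/rn) * δ ≤ (K:ℝ) * δ := mul_le_mul_of_nonneg_right hc hδ0.le
      calc (1:ℝ) = ((m:ℝ)/rn) * δ := by rw [hδdef]; field_simp
        _ ≤ (K:ℝ) * δ := this
    have hKlt : (K:ℝ) < (m:ℝ)/rn + 1 := by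
      rw [hKdef]
      exact Nat.ceil_lt_add_one (by positivity)
    have hKup : (K:ℝ) * δ ≤ 1 + δ := by
      have : (K:ℝ) * δ ≤ ((m:ℝ)/rn + 1) * δ :=
        mul_le_mul_of_nonneg_right hKlt.le hδ0.le
      calc (K:ℝ) * δ ≤ ((m:ℝ)/rn + 1) * δ := this
        _ = ((m:ℝ)/rn) * δ + δ := by ring
        _ = 1 + δ := by rw [hδdef]; field_simp
    have hKn : (K:ℝ) ≤ (n:ℝ) := by
      have h2m : 2*(m:ℝ) ≤ (n:ℝ) * rn := le_trans h5 hE2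
      have hmr : (m:ℝ)/rn ≤ (n:ℝ)/2 := by
        rw [div_le_div_iff₀ hrn0 (by norm_num : (0:ℝ) < 2)]
        linarith
      have hn2 : (2:ℝ) ≤ (n:ℝ) := by exact_mod_cast h1
      linarith
    have haup : ∀ k, k < K → (k:ℝ)*δ ≤ 1 := by
      intro k hk
      have hknat : k + 1 ≤ K := hk
      have hkK : (k:ℝ) + 1 ≤ (K:ℝ) := by exact_mod_cast hknat
      have hprod : ((k:ℝ) + 1)*δ ≤ (K:ℝ)*δ := mul_le_mul_of_nonneg_right hkK hδ0.le
      have hexp : ((k:ℝ)+1)*δ = (k:ℝ)*δ + δ := by ring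
      linarith
    set q1 : ℝ := rn * ((m:ℝ)-1)^2 / (m:ℝ)^2 with hq1def
    set q2 : ℝ := rn * ((m:ℝ)-2) / (m:ℝ)^2 with hq2def
    have hq10 : 0 ≤ q1 := by rw [hq1def]; positivity
    have hq20 : 0 ≤ q2 := by
      rw [hq2def]
      apply div_nonneg _ (by positivity)
      nlinarith
    have hq11 : q1 ≤ 1 := by
      rw [hq1def]
      rw [div_le_one (by positivity)]
      nlinarith
    have hq21 : q2 ≤ 1 := by
      rw [hq2def, div_le_one (by positivity)]
      nlinarith
    set Uncov : ℕ → Set (EvolSpace n) := fun k =>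
      {ω : EvolSpace n | ∀ i, (ω.1 i, ω.2 i) ∈ (coverSet rn ((k:ℝ)*δ) δ)ᶜ} with hUdef
    set Good : Set (EvolSpace n) :=
      {ω : EvolSpace n | ∀ i, (ω.1 i, ω.2 i) ∈ Set.Icc (0:ℝ) 1 ×ˢ Set.Icc (0:ℝ) 1}
      with hGdef
    have hGood : evolMeasure n Goodᶜ = 0 := by
      have hmG : evolMeasure n Good = 1 := by
        rw [hGdef, evolMeasure_forall_mem n _ (measurableSet_Icc.prod measurableSet_Icc),
          Measure.prod_prod]
        rw [show unif01 (Set.Icc (0:ℝ) 1) = 1 by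
          rw [unif01, Measure.restrict_apply measurableSet_Icc, Set.inter_self,
            Real.volume_Icc]
          norm_num]
        simp
      rw [measure_compl (measurableSet_forall_mem n _
        (measurableSet_Icc.prod measurableSet_Icc)) (measure_ne_top _ _), hmG,
        measure_univ, tsub_self]
    have hsubset : {ω : EvolSpace n | ¬ (evolGraph n rn ω).Connected}
        ⊆ Goodᶜ ∪ ⋃ k ∈ Finset.range K, Uncov k := by
      intro ω hω
      rw [Set.mem_union]
      by_contra hcon
      push_neg at hcon
      obtain ⟨hg, hu⟩ := hcon
      rw [Set.mem_compl_iff, not_not] at hg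
      refine hω (connected_of_covers n K rn δ hrn0.le hδ0 hK1 ω
        (fun i => (hg i).1) (fun i => (hg i).2.1) ?_)
      intro k hk
      have hnotm : ω ∉ Uncov k := fun hmem =>
        hu (Set.mem_biUnion (Finset.mem_range.mpr hk) hmem)
      simp only [hUdef, Set.mem_setOf_eq, Set.mem_compl_iff, not_forall, not_not]
        at hnotm
      exact hnotm
    have hcell_bd : ∀ k ∈ Finset.range K,
        evolMeasure n (Uncov k) ≤ ENNReal.ofReal (Real.exp (-((n:ℝ) * q2))) := by
      intro k hk
      apply uncov_bound n _ (measurableSet_coverSet _ _ _) q2 hq20 hq21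
      rw [hq2def]
      exact cover_lb_boundary rn δ m hm3 hrn0 hr1 hδdef _ (by positivity)
        (haup k (Finset.mem_range.mp hk))
    have hcell_int : ∀ k : ℕ, (rn ≤ (k:ℝ)*δ ∧ (k:ℝ)*δ + δ + rn ≤ 1) →
        evolMeasure n (Uncov k) ≤ ENNReal.ofReal (Real.exp (-((n:ℝ) * q1))) := by
      intro k hPk
      apply uncov_bound n _ (measurableSet_coverSet _ _ _) q1 hq10 hq11
      rw [hq1def]
      exact cover_lb_interior rn δ m (by omega) hrn0 hδdef _ hPk.1 hPk.2
    set P : ℕ → Prop := fun k => rn ≤ (k:ℝ)*δ ∧ (k:ℝ)*δ + δ + rn ≤ 1 with hPdef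
    have hcardbd : ((Finset.range K).filter (fun k => ¬ P k)).card ≤ 2*m+2 := by
      have hsub2 : (Finset.range K).filter (fun k => ¬ P k)
          ⊆ Finset.range m ∪ Finset.Ico (K - (m+2)) K := by
        intro k hk
        rw [Finset.mem_filter, Finset.mem_range] at hk
        obtain ⟨hkK, hnp⟩ := hk
        rw [Finset.mem_union, Finset.mem_range, Finset.mem_Ico]
        rcases not_and_or.mp hnp with hcase | hcase
        · left
          push_neg at hcase
          have hklt : (k:ℝ)*δ < (m:ℝ)*δ := by rw [hmδ]; exact hcase
          have : (k:ℝ) < (m:ℝ) := lt_of_mul_lt_mul_right hklt hδ0.le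
          exact_mod_cast this
        · right
          push_neg at hcase
          refine ⟨?_, hkK⟩
          have hrnm : rn = (m:ℝ) * δ := hmδ.symm
          have hreal : (K:ℝ) < (k:ℝ) + ((m:ℕ):ℝ) + 2 := by
            have h1' : (K:ℝ)*δ < ((k:ℝ) + (m:ℝ) + 2)*δ := by
              rw [hrnm] at hcase
              nlinarith
            have := lt_of_mul_lt_mul_right h1' hδ0.le
            exact this
          have hnat : K < k + m + 2 := by exact_mod_cast hreal
          omega
      calc ((Finset.range K).filter (fun k => ¬ P k)).card
          ≤ (Finset.range m ∪ Finset.Ico (K - (m+2)) K).card :=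
            Finset.card_le_card hsub2
        _ ≤ (Finset.range m).card + (Finset.Ico (K - (m+2)) K).card :=
            Finset.card_union_le _ _
        _ ≤ 2*m+2 := by
            rw [Finset.card_range, Nat.card_Ico]
            omega
    have hsum : ∑ k ∈ Finset.range K, evolMeasure n (Uncov k)
        ≤ K • ENNReal.ofReal (Real.exp (-((n:ℝ) * q1)))
          + (2*m+2) • ENNReal.ofReal (Real.exp (-((n:ℝ) * q2))) := by
      rw [← Finset.sum_filter_add_sum_filter_not (Finset.range K) P]
      refine add_le_add ?_ ?_
      · refine le_trans (Finset.sum_le_card_nsmul _ _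
            (ENNReal.ofReal (Real.exp (-((n:ℝ) * q1)))) ?_) ?_
        · intro k hk
          rw [Finset.mem_filter] at hk
          exact hcell_int k hk.2
        · exact nsmul_le_nsmul_left zero_le (le_trans (Finset.card_filter_le _ _)
            (le_of_eq (Finset.card_range K)))
      · refine le_trans (Finset.sum_le_card_nsmul _ _
            (ENNReal.ofReal (Real.exp (-((n:ℝ) * q2)))) ?_) ?_
        · intro k hk
          rw [Finset.mem_filter] at hk
          exact hcell_bd k hk.1
        · exact nsmul_le_nsmul_left zero_le hcardbd
    have hfinal : K • ENNReal.ofReal (Real.exp (-((n:ℝ) * q1)))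
          + (2*m+2) • ENNReal.ofReal (Real.exp (-((n:ℝ) * q2)))
        ≤ ENNReal.ofReal (B n) := by
      have e1 : (K : ℕ) • ENNReal.ofReal (Real.exp (-((n:ℝ) * q1)))
          = ENNReal.ofReal ((K:ℝ) * Real.exp (-((n:ℝ) * q1))) := by
        rw [nsmul_eq_mul, ← ENNReal.ofReal_natCast K,
          ← ENNReal.ofReal_mul (by positivity)]
      have e2 : (2*m+2 : ℕ) • ENNReal.ofReal (Real.exp (-((n:ℝ) * q2)))
          = ENNReal.ofReal (((2*m+2 : ℕ):ℝ) * Real.exp (-((n:ℝ) * q2))) := by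
        rw [nsmul_eq_mul, ← ENNReal.ofReal_natCast (2*m+2),
          ← ENNReal.ofReal_mul (by positivity)]
      rw [e1, e2, ← ENNReal.ofReal_add (by positivity) (by positivity)]
      apply ENNReal.ofReal_le_ofReal
      have hnq1 : (1+β) * Real.log n ≤ (n:ℝ) * q1 := by
        have hfact : 0 ≤ ((m:ℝ)-1)^2 / (m:ℝ)^2 := by positivity
        have := mul_le_mul_of_nonneg_right hE2 hfact
        calc (1+β) * Real.log n = (A * (((m:ℝ)-1)/m)^2) * Real.log n := by
              rw [hβ]; ring
          _ = (A * Real.log n) * (((m:ℝ)-1)^2 / (m:ℝ)^2) := by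
              rw [div_pow]; ring
          _ ≤ ((n:ℝ) * rn) * (((m:ℝ)-1)^2 / (m:ℝ)^2) := this
          _ = (n:ℝ) * q1 := by rw [hq1def]; ring
      have hnq2 : γ * Real.log n ≤ (n:ℝ) * q2 := by
        have hfact : 0 ≤ ((m:ℝ)-2) / (m:ℝ)^2 := by
          apply div_nonneg _ (by positivity); linarith
        have := mul_le_mul_of_nonneg_right hE2 hfact
        calc γ * Real.log n = (A * Real.log n) * (((m:ℝ)-2) / (m:ℝ)^2) := by
              rw [hγ]; ring
          _ ≤ ((n:ℝ) * rn) * (((m:ℝ)-2) / (m:ℝ)^2) := this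
          _ = (n:ℝ) * q2 := by rw [hq2def]; ring
      have t1 : (K:ℝ) * Real.exp (-((n:ℝ) * q1)) ≤ Real.exp (-(β * Real.log n)) := by
        have hKexp : (K:ℝ) * Real.exp (-((n:ℝ) * q1))
            ≤ (n:ℝ) * Real.exp (-((1+β) * Real.log n)) := by
          apply mul_le_mul hKn (Real.exp_le_exp.mpr (by linarith)) (by positivity)
            (by linarith)
        calc (K:ℝ) * Real.exp (-((n:ℝ) * q1))
            ≤ (n:ℝ) * Real.exp (-((1+β) * Real.log n)) := hKexp
          _ = Real.exp (Real.log n) * Real.exp (-((1+β) * Real.log n)) := by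
              rw [Real.exp_log hn0]
          _ = Real.exp (Real.log n + -((1+β) * Real.log n)) := by
              rw [← Real.exp_add]
          _ = Real.exp (-(β * Real.log n)) := by congr 1; ring
      have t2 : ((2*m+2 : ℕ):ℝ) * Real.exp (-((n:ℝ) * q2))
          ≤ (2*(m:ℝ)+2) * Real.exp (-(γ * Real.log n)) := by
        have : ((2*m+2 : ℕ):ℝ) = 2*(m:ℝ)+2 := by push_cast; ring
        rw [this]
        apply mul_le_mul_of_nonneg_left (Real.exp_le_exp.mpr (by linarith))
          (by linarith)
      rw [hB]
      dsimp only
      linarith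
    have hbad : evolMeasure n {ω : EvolSpace n | ¬ (evolGraph n rn ω).Connected}
        ≤ ENNReal.ofReal (B n) := by
      calc evolMeasure n {ω : EvolSpace n | ¬ (evolGraph n rn ω).Connected}
          ≤ evolMeasure n (Goodᶜ ∪ ⋃ k ∈ Finset.range K, Uncov k) :=
            measure_mono hsubset
        _ ≤ evolMeasure n Goodᶜ + evolMeasure n (⋃ k ∈ Finset.range K, Uncov k) :=
            measure_union_le _ _
        _ ≤ 0 + ∑ k ∈ Finset.range K, evolMeasure n (Uncov k) :=
            add_le_add (le_of_eq hGood) (measure_biUnion_finset_le _ _)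
        _ = ∑ k ∈ Finset.range K, evolMeasure n (Uncov k) := zero_add _
        _ ≤ _ := hsum
        _ ≤ ENNReal.ofReal (B n) := hfinal
    have hle1 : (1:ENNReal) ≤ connProb n rn + ENNReal.ofReal (B n) := by
      have huniv : (Set.univ : Set (EvolSpace n))
          ⊆ {ω : EvolSpace n | (evolGraph n rn ω).Connected}
            ∪ {ω : EvolSpace n | ¬ (evolGraph n rn ω).Connected} := by
        intro ω _
        by_cases h : (evolGraph n rn ω).Connected
        · exact Or.inl h
        · exact Or.inr h
      calc (1:ENNReal) = evolMeasure n Set.univ := measure_univ.symm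
        _ ≤ evolMeasure n ({ω : EvolSpace n | (evolGraph n rn ω).Connected}
            ∪ {ω : EvolSpace n | ¬ (evolGraph n rn ω).Connected}) :=
            measure_mono huniv
        _ ≤ evolMeasure n {ω : EvolSpace n | (evolGraph n rn ω).Connected}
            + evolMeasure n {ω : EvolSpace n | ¬ (evolGraph n rn ω).Connected} :=
            measure_union_le _ _
        _ ≤ connProb n rn + ENNReal.ofReal (B n) := add_le_add le_rfl hbad
    exact tsub_le_iff_right.mpr hle1
  -- squeeze
  have hofr : Tendsto (fun n => ENNReal.ofReal (B n)) atTop (nhds 0) := by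
    have := ENNReal.tendsto_ofReal hBlim
    simpa using this
  have hglim : Tendsto (fun n => 1 - ENNReal.ofReal (B n)) atTop (nhds 1) := by
    have := ENNReal.Tendsto.sub (tendsto_const_nhds (x := (1 : ENNReal))) hofr
      (Or.inr (by simp))
    simpa using this
  exact tendsto_of_tendsto_of_tendsto_of_le_of_le' hglim tendsto_const_nhds hmain
    (Eventually.of_forall fun n => prob_le_one)

end
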